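/- arXiv:1908.09378 — 3 statements merged into one kernel-verified Lean document; each statement's English description precedes it below -/
import Mathlib

section
/- Let d ≥ 1 and i ≥ 1 be natural numbers. Suppose s, b : ℕ → ℕ track the sizes of signal buffer S_i and bucket B_i of level i between consecutive executions of Resolve(i), i.e., s 0 = 0 and b 0 = d·2^(2i+1), and each execution of Resolve(i−1) adds at most d·2^(2(i−1)) elements to S_i and removes at most d·2^(2(i−1)) elements from B_i: for all t, s (t+1) ≤ s t + d·2^(2(i−1)) and b t ≤ b (t+1) + d·2^(2(i−1)). Then after at most 4 executions of Resolve(i−1), the preconditions of Resolve(i) remain satisfied: for all t ≤ 4, s t ≤ d·2^(2i) and b t ≥ d·2^(2i). -/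
/-- Theorem 1, part (i): sizes of `S_i` and `B_i` between consecutive executions of
`Resolve(i)` stay within the preconditions for at most 4 executions of `Resolve(i-1)`. -/
theorem parBucketHeap_level_preconditions
    (d i : ℕ) (hd : 1 ≤ d) (hi : 1 ≤ i) (s b : ℕ → ℕ)
    (hs0 : s 0 = 0) (hb0 : b 0 = d * 2 ^ (2 * i + 1))
    (hs : ∀ t, s (t + 1) ≤ s t + d * 2 ^ (2 * (i - 1)))
    (hb : ∀ t, b t ≤ b (t + 1) + d * 2 ^ (2 * (i - 1))) :
    ∀ t ≤ 4, s t ≤ d * 2 ^ (2 * i) ∧ d * 2 ^ (2 * i) ≤ b t := by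
  set c := d * 2 ^ (2 * (i - 1)) with hc
  have key : ∀ t, s t ≤ t * c ∧ b 0 ≤ b t + t * c := by
    intro t
    induction t with
    | zero => simp [hs0]
    | succ n ih =>
      constructor
      · calc s (n + 1) ≤ s n + c := hs n
          _ ≤ n * c + c := by gcongr; exact ih.1
          _ = (n + 1) * c := by ring
      · calc b 0 ≤ b n + n * c := ih.2
          _ ≤ (b (n + 1) + c) + n * c := by gcongr; exact hb n
          _ = b (n + 1) + (n + 1) * c := by ring
  have h4 : 4 * c = d * 2 ^ (2 * i) := by
    have : 2 * i = 2 * (i - 1) + 2 := by omega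
    rw [hc, this, pow_add]; ring
  intro t ht
  have h1 := (key t).1
  have h2 := (key t).2
  have htc : t * c ≤ 4 * c := Nat.mul_le_mul_right c ht
  constructor
  · calc s t ≤ t * c := h1
      _ ≤ 4 * c := htc
      _ = d * 2 ^ (2 * i) := h4
  · have hb0' : b 0 = 2 * (d * 2 ^ (2 * i)) := by
      rw [hb0, pow_succ]; ring
    have : 2 * (d * 2 ^ (2 * i)) ≤ b t + d * 2 ^ (2 * i) := by
      calc 2 * (d * 2 ^ (2 * i)) = b 0 := hb0'.symm
        _ ≤ b t + t * c := h2
        _ ≤ b t + 4 * c := by gcongr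
        _ = b t + d * 2 ^ (2 * i) := by rw [h4]
    omega
end

section
/- Let d ≥ 1 and i ≥ 0 be natural numbers. Suppose s, b : ℕ → ℕ track the sizes of signal buffer S_{i+1} and bucket B_{i+1} between consecutive executions of Resolve(i+1), i.e., s 0 = 0 and b 0 = d·2^(2(i+1)+1), and each execution of Resolve(i) adds at most d·2^(2i) elements to S_{i+1} and removes at most d·2^(2i) elements from B_{i+1}: for all t, s (t+1) ≤ s t + d·2^(2i) and b t ≤ b (t+1) + d·2^(2i). Then after at most 3 executions of Resolve(i), the preconditions of Resolve(i) concerning level i+1 remain satisfied: for all t ≤ 3, s t ≤ d·2^(2(i+1)) − d·2^(2i) and b t ≥ d·2^(2(i+1)) + d·2^(2i). -/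
/-- Theorem 1, part (ii): sizes of `S_{i+1}` and `B_{i+1}` between consecutive executions of
`Resolve(i+1)` satisfy the preconditions of `Resolve(i)` concerning level `i+1`
for at most 3 executions of `Resolve(i)`. -/
theorem parBucketHeap_nextLevel_preconditions
    (d i : ℕ) (hd : 1 ≤ d) (s b : ℕ → ℕ)
    (hs0 : s 0 = 0) (hb0 : b 0 = d * 2 ^ (2 * (i + 1) + 1))
    (hs : ∀ t, s (t + 1) ≤ s t + d * 2 ^ (2 * i))
    (hb : ∀ t, b t ≤ b (t + 1) + d * 2 ^ (2 * i)) :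
    ∀ t ≤ 3, s t ≤ d * 2 ^ (2 * (i + 1)) - d * 2 ^ (2 * i) ∧
      d * 2 ^ (2 * (i + 1)) + d * 2 ^ (2 * i) ≤ b t := by
  set X := d * 2 ^ (2 * i) with hX
  have hpow : d * 2 ^ (2 * (i + 1)) = 4 * X := by
    rw [hX, show 2 * (i+1) = 2*i + 2 by ring, pow_add]; ring
  have hpow' : d * 2 ^ (2 * (i + 1) + 1) = 8 * X := by
    rw [hX, show 2 * (i+1) + 1 = 2*i + 3 by ring, pow_add]; ring
  have hsle : ∀ t, s t ≤ t * X := by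
    intro t
    induction t with
    | zero => simp [hs0]
    | succ n ih =>
      calc s (n+1) ≤ s n + X := hs n
        _ ≤ n * X + X := by omega
        _ = (n+1) * X := by ring
  have hble : ∀ t, 8 * X ≤ b t + t * X := by
    intro t
    induction t with
    | zero => simp [hb0, hpow']
    | succ n ih =>
      have := hb n
      calc 8 * X ≤ b n + n * X := ih
        _ ≤ (b (n+1) + X) + n * X := by omega
        _ = b (n+1) + (n+1) * X := by ring
  intro t ht
  have h1 := hsle t
  have h2 := hble t
  have ht3 : t * X ≤ 3 * X := Nat.mul_le_mul_right X ht
  constructor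
  · rw [hpow]; omega
  · rw [hpow]; omega
end

section
/- Define start(i, k) := 5·k·4^i − 5 + (4^i − 1)/3 and end(i, k) := start(i, k) + 4^i for natural numbers i and k ≥ 1. Then this schedule satisfies all dependency constraints of the parallel bucket heap: (a) start(0, k) = 5k − 5 for all k ≥ 1; (b) for all k ≥ 2, end(0, k−1) ≤ start(0, k); (c) for all i ≥ 1 and k ≥ 1, end(i−1, 4k) ≤ start(i, k); and (d) for all i ≥ 0 and m ≥ 1, end(i+1, m) ≤ start(i, 4m+1). In particular, with the k-th operation performed at timestep 5k − 5 and Resolve(i) taking at most 4^i timesteps, all dependencies are satisfied. -/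
/-- Starting timestep of the `k`-th execution of `Resolve(i)`. -/
def resolveStart (i k : ℕ) : ℤ := 5 * k * 4 ^ i - 5 + (4 ^ i - 1) / 3

/-- Ending timestep of the `k`-th execution of `Resolve(i)`: the resolve takes `4^i` timesteps. -/
def resolveEnd (i k : ℕ) : ℤ := resolveStart i k + 4 ^ i

lemma three_dvd (i : ℕ) : (3:ℤ) ∣ 4 ^ i - 1 := by
  induction i with
  | zero => simp
  | succ n ih =>
    obtain ⟨t, ht⟩ := ih
    exact ⟨4 * t + 1, by rw [pow_succ]; linarith⟩

lemma div_eq (i : ℕ) {t : ℤ} (h : (4:ℤ) ^ i - 1 = 3 * t) : ((4:ℤ) ^ i - 1) / 3 = t := by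
  rw [h]; exact Int.mul_ediv_cancel_left t (by norm_num)

/-- Lemma 3: the schedule `start(i,k) = 5k·4^i − 5 + (4^i − 1)/3`, with `Resolve(i)` taking
at most `4^i` timesteps, satisfies all dependency constraints of the parallel bucket heap. -/
theorem resolution_schedule_satisfies_dependencies :
    (∀ k : ℕ, 1 ≤ k → resolveStart 0 k = 5 * k - 5) ∧
    (∀ k : ℕ, 2 ≤ k → resolveEnd 0 (k - 1) ≤ resolveStart 0 k) ∧
    (∀ i k : ℕ, 1 ≤ i → 1 ≤ k → resolveEnd (i - 1) (4 * k) ≤ resolveStart i k) ∧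
    (∀ i m : ℕ, 1 ≤ m → resolveEnd (i + 1) m ≤ resolveStart i (4 * m + 1)) := by
  refine ⟨?_, ?_, ?_, ?_⟩
  · intro k hk; simp [resolveStart]
  · intro k hk
    have h1 : ((k : ℤ) - 1) = ((k - 1 : ℕ) : ℤ) := by
      rw [Nat.cast_sub (by omega)]; simp
    simp [resolveEnd, resolveStart, ← h1]
  · intro i k hi hk
    obtain ⟨j, rfl⟩ : ∃ j, i = j + 1 := ⟨i - 1, by omega⟩
    obtain ⟨t, ht⟩ := three_dvd j
    have h1 : ((4:ℤ) ^ j - 1) / 3 = t := div_eq j ht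
    have h2 : ((4:ℤ) ^ (j + 1) - 1) / 3 = 4 * t + 1 := by
      apply div_eq; rw [pow_succ]; linarith
    simp only [resolveEnd, resolveStart, Nat.add_sub_cancel, h1, h2]
    push_cast
    rw [pow_succ]
    nlinarith [hk, ht]
  · intro i m hm
    obtain ⟨t, ht⟩ := three_dvd i
    have h1 : ((4:ℤ) ^ i - 1) / 3 = t := div_eq i ht
    have h2 : ((4:ℤ) ^ (i + 1) - 1) / 3 = 4 * t + 1 := by
      apply div_eq; rw [pow_succ]; linarith
    simp only [resolveEnd, resolveStart, h1, h2]
    push_cast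
    rw [pow_succ]
    nlinarith [hm, ht]
end
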